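/- Importance sampling, compact parameter set: in the importance-sampling setting, suppose the index set T is a compact subset of ℝ^m, T_o is an open set containing T, and p_{T_o} : ℝ × T_o → ℝ is a Borel measurable map with p_{T_o}(·, t) = p_t for every t ∈ T, continuously differentiable in both arguments (x, t). If moreover ∫_ℝ sup_{t∈T} p_t(x) dx < +∞ and f is bounded, then the importance-sampling estimator Ê̲_n^{𝒫/P}(f) is a strongly consistent estimator of E̲^𝒫(f). -/

import Mathlib

open MeasureTheory Filter Topology ProbabilityTheory
open scoped ENNReal

noncomputable section

/-- The positive part of an extended real number, as an element of `ℝ≥0∞`. -/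
def epos (x : EReal) : ℝ≥0∞ := if x = ⊤ then ⊤ else ENNReal.ofReal x.toReal

/-- The (possibly infinite) expectation `E(g) = ∫ g⁺ − ∫ g⁻` of an extended-real map. -/
def eExp {Ω : Type*} [MeasurableSpace Ω] (μ : Measure Ω) (g : Ω → EReal) : EReal :=
  ((∫⁻ ω, epos (g ω) ∂μ : ℝ≥0∞) : EReal) - ((∫⁻ ω, epos (-(g ω)) ∂μ : ℝ≥0∞) : EReal)

/-- `E(g)` exists: at least one of `E(g⁺)`, `E(g⁻)` is finite. -/
def eExpExists {Ω : Type*} [MeasurableSpace Ω] (μ : Measure Ω) (g : Ω → EReal) : Prop :=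
  (∫⁻ ω, epos (g ω) ∂μ) ≠ ⊤ ∨ (∫⁻ ω, epos (-(g ω)) ∂μ) ≠ ⊤

/-- Outer expectation of an arbitrary extended-real map: the infimum of `E(g)` over all
measurable `g ≥ h` whose expectation exists. -/
def outerExp {Ω : Type*} [MeasurableSpace Ω] (μ : Measure Ω) (h : Ω → EReal) : EReal :=
  sInf {y : EReal | ∃ g : Ω → EReal,
    Measurable g ∧ (∀ ω, h ω ≤ g ω) ∧ eExpExists μ g ∧ eExp μ g = y}

/-- Inner expectation of an arbitrary extended-real map. -/
def innerExp {Ω : Type*} [MeasurableSpace Ω] (μ : Measure Ω) (h : Ω → EReal) : EReal :=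
  - outerExp μ (fun ω => - h ω)

/-- `g` is a minimal measurable cover of `h` w.r.t. `μ`: it is measurable, dominates `h`
pointwise, and is a.s. below any measurable map dominating `h` pointwise. -/
def IsMinMeasCover {Ω : Type*} [MeasurableSpace Ω] (μ : Measure Ω) (h g : Ω → EReal) : Prop :=
  Measurable g ∧ (∀ ω, h ω ≤ g ω) ∧
    ∀ g' : Ω → EReal, Measurable g' → (∀ ω, h ω ≤ g' ω) → ∀ᵐ ω ∂μ, g ω ≤ g' ω

/-- Absolute value on extended reals. -/
def eabs (x : EReal) : EReal := max x (-x)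

open scoped NNReal


lemma ciSup_dense_eq {K : Type*} [TopologicalSpace K] [Nonempty K] {h : K → ℝ}
    (hc : Continuous h) {D : Set K} (hD : Dense D) (hbdd : BddAbove (Set.range h)) :
    ⨆ d : D, h ↑d = ⨆ k, h k := by
  have hDne : D.Nonempty := hD.nonempty
  have : Nonempty D := hDne.to_subtype
  have hbd : BddAbove (Set.range fun d : D => h ↑d) :=
    hbdd.mono (by rintro _ ⟨d, rfl⟩; exact ⟨d, rfl⟩)
  refine le_antisymm (ciSup_le fun d => le_ciSup hbdd _) (ciSup_le fun k => ?_)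
  have hk : h k ∈ closure (h '' D) := by
    have : k ∈ closure D := hD k
    exact map_mem_closure hc this (fun x hx => Set.mem_image_of_mem h hx)
  have hcl : closure (h '' D) ⊆ {y : ℝ | y ≤ ⨆ d : D, h ↑d} := by
    apply closure_minimal ?_ (isClosed_le continuous_id continuous_const)
    rintro _ ⟨d, hd, rfl⟩
    exact le_ciSup hbd (⟨d, hd⟩ : D)
  exact hcl hk

lemma ciInf_dense_eq {K : Type*} [TopologicalSpace K] [Nonempty K] {h : K → ℝ}
    (hc : Continuous h) {D : Set K} (hD : Dense D) (hbdd : BddBelow (Set.range h)) :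
    ⨅ d : D, h ↑d = ⨅ k, h k := by
  have hDne : D.Nonempty := hD.nonempty
  have : Nonempty D := hDne.to_subtype
  have hbd : BddBelow (Set.range fun d : D => h ↑d) :=
    hbdd.mono (by rintro _ ⟨d, rfl⟩; exact ⟨d, rfl⟩)
  refine le_antisymm (le_ciInf fun k => ?_) (le_ciInf fun d => ciInf_le hbdd _)
  have hk : h k ∈ closure (h '' D) := by
    have : k ∈ closure D := hD k
    exact map_mem_closure hc this (fun x hx => Set.mem_image_of_mem h hx)
  have hcl : closure (h '' D) ⊆ {y : ℝ | (⨅ d : D, h ↑d) ≤ y} := by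
    apply closure_minimal ?_ (isClosed_le continuous_const continuous_id)
    rintro _ ⟨d, hd, rfl⟩
    exact ciInf_le hbd (⟨d, hd⟩ : D)
  exact hcl hk



lemma measurable_ciInf_cont {α : Type*} [MeasurableSpace α] {K : Type*} [TopologicalSpace K] [SecondCountableTopology K]
    [Nonempty K] {F : α → K → ℝ} (hFx : ∀ t, Measurable fun x => F x t)
    (hFt : ∀ x, Continuous (F x)) {env : α → ℝ} (hbound : ∀ x t, |F x t| ≤ env x) :
    Measurable fun x => ⨅ t, F x t := by
  obtain ⟨D, hDc, hDd⟩ := TopologicalSpace.exists_countable_dense K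
  have : Countable D := hDc.to_subtype
  have : Nonempty D := hDd.nonempty.to_subtype
  have heq : ∀ x, (⨅ t, F x t) = ⨅ d : D, F x ↑d := by
    intro x
    refine (ciInf_dense_eq (hFt x) hDd ?_).symm
    exact ⟨-env x, by rintro _ ⟨t, rfl⟩; exact neg_le_of_abs_le (hbound x t)⟩
  simp_rw [heq]
  exact Measurable.iInf fun d => hFx ↑d

lemma measurable_ciSup_cont {α : Type*} [MeasurableSpace α] {K : Type*} [TopologicalSpace K] [SecondCountableTopology K]
    [Nonempty K] {F : α → K → ℝ} (hFx : ∀ t, Measurable fun x => F x t)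
    (hFt : ∀ x, Continuous (F x)) {env : α → ℝ} (hbound : ∀ x t, |F x t| ≤ env x) :
    Measurable fun x => ⨆ t, F x t := by
  obtain ⟨D, hDc, hDd⟩ := TopologicalSpace.exists_countable_dense K
  have : Countable D := hDc.to_subtype
  have : Nonempty D := hDd.nonempty.to_subtype
  have heq : ∀ x, (⨆ t, F x t) = ⨆ d : D, F x ↑d := by
    intro x
    refine (ciSup_dense_eq (hFt x) hDd ?_).symm
    exact ⟨env x, by rintro _ ⟨t, rfl⟩; exact le_of_abs_le (hbound x t)⟩
  simp_rw [heq]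
  exact Measurable.iSup fun d => hFx ↑d



lemma slln_comp (P : Measure ℝ) [IsProbabilityMeasure P]
    (μ : Measure (ℕ → ℝ)) [IsProbabilityMeasure μ]
    (hmap : ∀ k : ℕ, μ.map (fun ω => ω k) = P)
    (hind : iIndepFun
      (fun k (ω : ℕ → ℝ) => ω k) μ)
    (φ : ℝ → ℝ) (hφm : Measurable φ) (hφi : Integrable φ P) :
    ∀ᵐ ω ∂μ, Tendsto (fun n : ℕ => (n : ℝ)⁻¹ * ∑ k ∈ Finset.range n, φ (ω k)) atTop
      (𝓝 (∫ x, φ x ∂P)) := by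
  set X : ℕ → (ℕ → ℝ) → ℝ := fun k ω => φ (ω k) with hX
  have hmeas : ∀ k, Measurable (X k) := fun k => hφm.comp (measurable_pi_apply k)
  have hint : Integrable (X 0) μ := by
    have h0 : Integrable φ (μ.map (fun ω => ω 0)) := by rw [hmap 0]; exact hφi
    exact (integrable_map_measure hφm.aestronglyMeasurable
      (measurable_pi_apply 0).aemeasurable).mp h0
  have hindep : Pairwise (Function.onFun (IndepFun · · μ) X) := by
    intro i j hij
    exact (hind.indepFun hij).comp hφm hφm
  have hident : ∀ i, IdentDistrib (X i) (X 0) μ μ := by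
    intro i
    refine ⟨(hmeas i).aemeasurable, (hmeas 0).aemeasurable, ?_⟩
    show μ.map (fun ω : ℕ → ℝ => φ (ω i)) = μ.map (fun ω : ℕ → ℝ => φ (ω 0))
    rw [show (fun ω : ℕ → ℝ => φ (ω i)) = φ ∘ (fun ω => ω i) from rfl,
      show (fun ω : ℕ → ℝ => φ (ω 0)) = φ ∘ (fun ω => ω 0) from rfl,
      ← Measure.map_map hφm (measurable_pi_apply i),
      ← Measure.map_map hφm (measurable_pi_apply 0), hmap i, hmap 0]
  have h := strong_law_ae X hint hindep hident
  have hE : μ[X 0] = ∫ x, φ x ∂P := by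
    rw [hX]
    have : ∫ ω, φ (ω 0) ∂μ = ∫ x, φ x ∂(μ.map (fun ω => ω 0)) :=
      (integral_map (measurable_pi_apply 0).aemeasurable hφm.aestronglyMeasurable).symm
    rw [show μ[fun ω : ℕ → ℝ => φ (ω 0)] = ∫ ω, φ (ω 0) ∂μ from rfl, this, hmap 0]
  filter_upwards [h] with ω hω
  rw [hE] at hω
  simpa [smul_eq_mul] using hω



lemma uniform_inf_slln {K : Type*} [MetricSpace K] [CompactSpace K]
    [SecondCountableTopology K] [Nonempty K]
    (P : Measure ℝ) [IsProbabilityMeasure P]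
    (μ : Measure (ℕ → ℝ)) [IsProbabilityMeasure μ]
    (hmap : ∀ k : ℕ, μ.map (fun ω => ω k) = P)
    (hind : iIndepFun
      (fun k (ω : ℕ → ℝ) => ω k) μ)
    (F : ℝ → K → ℝ) (hFx : ∀ t, Measurable fun x => F x t) (hFt : ∀ x, Continuous (F x))
    (env : ℝ → ℝ) (henvi : Integrable env P)
    (hbound : ∀ x t, |F x t| ≤ env x) :
    ∀ᵐ ω ∂μ, Tendsto (fun n : ℕ => ⨅ t, (n : ℝ)⁻¹ * ∑ k ∈ Finset.range n, F (ω k) t) atTop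
      (𝓝 (⨅ t, ∫ x, F x t ∂P)) := by
  have henv0 : ∀ x, 0 ≤ env x := fun x => le_trans (abs_nonneg _) (hbound x (Classical.arbitrary K))
  -- continuity of the limit function
  set E : K → ℝ := fun t => ∫ x, F x t ∂P with hE
  have hEcont : Continuous E := by
    apply continuous_of_dominated (bound := env) (fun t => (hFx t).aestronglyMeasurable)
      (fun t => ae_of_all _ fun x => by simpa [Real.norm_eq_abs] using hbound x t) henvi
    exact ae_of_all _ hFt
  obtain ⟨tm, -, htm⟩ := isCompact_univ.exists_isMinOn (Set.univ_nonempty) hEcont.continuousOn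
  have htm' : ∀ t, E tm ≤ E t := fun t => htm (Set.mem_univ t)
  have hEbdd : BddBelow (Set.range E) := ⟨E tm, by rintro _ ⟨t, rfl⟩; exact htm' t⟩
  have hinfE : (⨅ t, E t) = E tm := le_antisymm (ciInf_le hEbdd tm) (le_ciInf htm')
  -- bracket functions
  have hballne : ∀ (d : K) (j : ℕ), Nonempty ↥(Metric.ball d (1 / (j + 1) : ℝ)) := by
    intro d j
    exact ⟨⟨d, Metric.mem_ball_self (by positivity)⟩⟩
  set L : K → ℕ → ℝ → ℝ := fun d j x => ⨅ s : ↥(Metric.ball d (1 / (j + 1) : ℝ)), F x ↑s with hL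
  have hLbound : ∀ d j x, |L d j x| ≤ env x := by
    intro d j x
    have := hballne d j
    rw [abs_le]
    constructor
    · exact le_ciInf fun s => neg_le_of_abs_le (hbound x ↑s)
    · refine le_trans (ciInf_le ⟨-env x, ?_⟩ (⟨d, Metric.mem_ball_self (by positivity)⟩ :
        ↥(Metric.ball d (1 / (j + 1) : ℝ)))) (le_of_abs_le (hbound x d))
      rintro _ ⟨s, rfl⟩; exact neg_le_of_abs_le (hbound x ↑s)
  have hLmeas : ∀ d j, Measurable (L d j) := by
    intro d j
    have := hballne d j
    exact measurable_ciInf_cont (fun s => hFx ↑s)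
      (fun x => (hFt x).comp continuous_subtype_val) (fun x s => hbound x ↑s)
  have hLle : ∀ (d : K) (j : ℕ) (t : K), t ∈ Metric.ball d (1 / (j + 1) : ℝ) → ∀ x, L d j x ≤ F x t := by
    intro d j t ht x
    have := hballne d j
    refine ciInf_le ⟨-env x, ?_⟩ (⟨t, ht⟩ : ↥(Metric.ball d (1 / (j + 1) : ℝ)))
    rintro _ ⟨s, rfl⟩; exact neg_le_of_abs_le (hbound x ↑s)
  have hLint : ∀ d j, Integrable (L d j) P :=
    fun d j => henvi.mono' (hLmeas d j).aestronglyMeasurable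
      (ae_of_all _ fun x => by rw [Real.norm_eq_abs]; exact hLbound d j x)
  -- pointwise convergence of brackets
  have hLtend : ∀ d x, Tendsto (fun j => L d j x) atTop (𝓝 (F x d)) := by
    intro d x
    rw [Metric.tendsto_atTop]
    intro ε hε
    obtain ⟨δ, hδ0, hδ⟩ := Metric.continuous_iff.mp (hFt x) d (ε / 2) (by positivity)
    obtain ⟨N, hN⟩ := exists_nat_one_div_lt hδ0
    refine ⟨N, fun j hj => ?_⟩
    have := hballne d j
    have hsub : Metric.ball d (1 / (j + 1) : ℝ) ⊆ Metric.ball d δ := by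
      apply Metric.ball_subset_ball
      calc (1 / (j + 1) : ℝ) ≤ 1 / (N + 1) := by
            apply one_div_le_one_div_of_le (by positivity)
            exact_mod_cast by omega
        _ ≤ δ := hN.le
    have h1 : L d j x ≤ F x d := hLle d j d (Metric.mem_ball_self (by positivity)) x
    have h2 : F x d - ε / 2 ≤ L d j x := by
      apply le_ciInf
      intro s
      have := hδ ↑s (hsub s.2)
      rw [Real.dist_eq] at this
      linarith [abs_lt.mp this]
    rw [Real.dist_eq, abs_sub_lt_iff]
    constructor <;> nlinarith
  have hLEtend : ∀ d, Tendsto (fun j => ∫ x, L d j x ∂P) atTop (𝓝 (E d)) := by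
    intro d
    exact tendsto_integral_of_dominated_convergence env
      (fun j => (hLmeas d j).aestronglyMeasurable) henvi
      (fun j => ae_of_all _ fun x => by rw [Real.norm_eq_abs]; exact hLbound d j x)
      (ae_of_all _ fun x => hLtend d x)
  -- key lower-bound events
  have key : ∀ m : ℕ, ∀ᵐ ω ∂μ, ∀ᶠ n : ℕ in atTop,
      E tm - 1 / (m + 1) ≤ ⨅ t, (n : ℝ)⁻¹ * ∑ k ∈ Finset.range n, F (ω k) t := by
    intro m
    set ε : ℝ := 1 / (m + 1) with hεdef
    have hε0 : 0 < ε := by positivity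
    -- choose radii
    have hch : ∀ d : K, ∃ j : ℕ, E tm - ε < ∫ x, L d j x ∂P := by
      intro d
      have : ∀ᶠ j in atTop, E tm - ε < ∫ x, L d j x ∂P := by
        apply (hLEtend d).eventually_const_lt
        have := htm' d
        linarith
      exact this.exists
    choose j hj using hch
    -- finite subcover
    have hcov : (Set.univ : Set K) ⊆ ⋃ d : K, Metric.ball d (1 / (j d + 1) : ℝ) := by
      intro t _
      exact Set.mem_iUnion.2 ⟨t, Metric.mem_ball_self (by positivity)⟩
    obtain ⟨s, hs⟩ := isCompact_univ.elim_finite_subcover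
      (fun d : K => Metric.ball d (1 / (j d + 1) : ℝ)) (fun d => Metric.isOpen_ball) hcov
    -- SLLN for each bracket in the cover
    have hslln : ∀ᵐ ω ∂μ, ∀ d ∈ (↑s : Set K), Tendsto
        (fun n : ℕ => (n : ℝ)⁻¹ * ∑ k ∈ Finset.range n, L d (j d) (ω k)) atTop
        (𝓝 (∫ x, L d (j d) x ∂P)) := by
      exact (ae_ball_iff s.countable_toSet).2 fun d _ =>
        slln_comp P μ hmap hind _ (hLmeas d (j d)) (hLint d (j d))
    filter_upwards [hslln] with ω hω
    have hev : ∀ᶠ n : ℕ in atTop, ∀ d ∈ s,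
        E tm - ε ≤ (n : ℝ)⁻¹ * ∑ k ∈ Finset.range n, L d (j d) (ω k) := by
      rw [eventually_all_finset]
      intro d hd
      exact ((hω d (Finset.mem_coe.mpr hd)).eventually_const_lt (hj d)).mono
        fun n h => h.le
    filter_upwards [hev] with n hn
    apply le_ciInf
    intro t
    obtain ⟨d, hd, htd⟩ := Set.mem_iUnion₂.mp (hs (Set.mem_univ t))
    calc E tm - ε ≤ (n : ℝ)⁻¹ * ∑ k ∈ Finset.range n, L d (j d) (ω k) := hn d hd
      _ ≤ (n : ℝ)⁻¹ * ∑ k ∈ Finset.range n, F (ω k) t := by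
          apply mul_le_mul_of_nonneg_left _ (by positivity)
          exact Finset.sum_le_sum fun k _ => hLle d (j d) t htd (ω k)
  -- SLLN at the minimiser
  have hsllnm := slln_comp P μ hmap hind (fun x => F x tm) (hFx tm)
    (henvi.mono' (hFx tm).aestronglyMeasurable
      (ae_of_all _ fun x => by rw [Real.norm_eq_abs]; exact hbound x tm))
  rw [← ae_all_iff] at key
  filter_upwards [key, hsllnm] with ω hωkey hωm
  rw [hinfE]
  rw [tendsto_order]
  constructor
  · intro a ha
    obtain ⟨m, hm⟩ := exists_nat_one_div_lt (sub_pos.mpr ha)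
    filter_upwards [hωkey m] with n hn
    calc a < E tm - 1 / (m + 1) := by
          have : (1 : ℝ) / (m + 1) < E tm - a := hm
          linarith
      _ ≤ _ := hn
  · intro b hb
    have : ∀ᶠ n : ℕ in atTop,
        (n : ℝ)⁻¹ * ∑ k ∈ Finset.range n, F (ω k) tm < b := hωm.eventually_lt_const hb
    filter_upwards [this] with n hn
    refine lt_of_le_of_lt ?_ hn
    refine ciInf_le ⟨-((n : ℝ)⁻¹ * ∑ k ∈ Finset.range n, env (ω k)), ?_⟩ tm
    rintro _ ⟨t, rfl⟩
    have h1 : ∀ k ∈ Finset.range n, -env (ω k) ≤ F (ω k) t :=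
      fun k _ => neg_le_of_abs_le (hbound _ t)
    calc -((n : ℝ)⁻¹ * ∑ k ∈ Finset.range n, env (ω k))
        = (n : ℝ)⁻¹ * ∑ k ∈ Finset.range n, (-env (ω k)) := by
          rw [Finset.sum_neg_distrib]; ring
      _ ≤ _ := mul_le_mul_of_nonneg_left (Finset.sum_le_sum h1) (by positivity)

lemma ereal_iInf_coe {K : Type*} [TopologicalSpace K] [CompactSpace K] [Nonempty K]
    {g : K → ℝ} (hg : Continuous g) :
    (⨅ t, ((g t : ℝ) : EReal)) = ((⨅ t, g t : ℝ) : EReal) := by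
  obtain ⟨t0, -, ht0⟩ := isCompact_univ.exists_isMinOn Set.univ_nonempty hg.continuousOn
  have ht0' : ∀ t, g t0 ≤ g t := fun t => ht0 (Set.mem_univ t)
  have hbdd : BddBelow (Set.range g) := ⟨g t0, by rintro _ ⟨t, rfl⟩; exact ht0' t⟩
  have hinf : (⨅ t, g t) = g t0 := le_antisymm (ciInf_le hbdd t0) (le_ciInf ht0')
  refine le_antisymm ?_ (le_iInf fun t => EReal.coe_le_coe_iff.2 (ciInf_le hbdd t))
  rw [hinf]; exact iInf_le _ t0

lemma eabs_coe (r : ℝ) : eabs ((r : ℝ) : EReal) = ((|r| : ℝ) : EReal) := by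
  have hmono : Monotone ((↑) : ℝ → EReal) := fun _ _ h => EReal.coe_le_coe_iff.2 h
  rw [eabs, abs_eq_max_neg, hmono.map_max, EReal.coe_neg]

/-- **Importance sampling, compact parameter set.** In the importance-sampling
setting, suppose `T ⊆ ℝ^m` is compact, `T_o` is an open set containing `T`, and
`p_{T_o} : ℝ × T_o → ℝ` is a Borel measurable extension of the densities `(p_t)_{t∈T}`,
continuously differentiable in both arguments. If `∫ sup_{t∈T} p_t(x) dx < +∞` and `f` is
bounded, then the importance-sampling estimator `Ê̲_n^{𝒫/P}(f)` is a strongly consistent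
estimator of `E̲^𝒫(f)`. -/
theorem importance_sampling_compact_consistency
    {m : ℕ}
    (T To : Set (EuclideanSpace ℝ (Fin m))) (hTne : T.Nonempty)
    (hTcomp : IsCompact T) (hTo : IsOpen To) (hTTo : T ⊆ To)
    (p : ℝ → ℝ) (hpm : Measurable p) (hp0 : ∀ x, 0 ≤ p x)
    (P : Measure ℝ) (hP : P = volume.withDensity (fun x => ENNReal.ofReal (p x)))
    [IsProbabilityMeasure P]
    (pt : EuclideanSpace ℝ (Fin m) → ℝ → ℝ)
    (hptm : ∀ t ∈ T, Measurable (pt t)) (hpt0 : ∀ t ∈ T, ∀ x, 0 ≤ pt t x)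
    (Pt : EuclideanSpace ℝ (Fin m) → Measure ℝ)
    (hPt : ∀ t ∈ T, Pt t = volume.withDensity (fun x => ENNReal.ofReal (pt t x)))
    (hPtprob : ∀ t ∈ T, IsProbabilityMeasure (Pt t))
    (hsupp : ∀ t ∈ T, ∀ x, pt t x ≠ 0 → p x ≠ 0)
    (f : ℝ → ℝ) (hf : Measurable f)
    (hfint : ∀ t ∈ T, Integrable f (Pt t))
    (hsup : BddAbove ((fun t => ∫ x, |f x| ∂(Pt t)) '' T))
    -- the measurable extension `p_{T_o}`, continuously differentiable in `(x, t)`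
    (pTo : ℝ → EuclideanSpace ℝ (Fin m) → ℝ)
    (hpTom : Measurable (fun q : ℝ × EuclideanSpace ℝ (Fin m) => pTo q.1 q.2))
    (hagree : ∀ t ∈ T, ∀ x : ℝ, pTo x t = pt t x)
    (hC1 : ContDiffOn ℝ 1 (fun q : ℝ × EuclideanSpace ℝ (Fin m) => pTo q.1 q.2)
      (Set.univ ×ˢ To))
    (hsupdens : ∫⁻ x, ENNReal.ofReal (⨆ t : T, pt t x) ≠ ⊤)
    (hfbdd : ∃ M : ℝ, ∀ x, |f x| ≤ M)
    (μ : Measure (ℕ → ℝ)) [IsProbabilityMeasure μ]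
    (hmap : ∀ k : ℕ, μ.map (fun ω => ω k) = P)
    (hind : iIndepFun
      (fun k (ω : ℕ → ℝ) => ω k) μ) :
    ∃ H : ℕ → (ℕ → ℝ) → EReal,
      (∀ n : ℕ, IsMinMeasCover μ
        (fun ω => eabs ((⨅ t : T, (((n : ℝ)⁻¹ *
            ∑ k ∈ Finset.range n, f (ω k) * pt t (ω k) / p (ω k) : ℝ) : EReal)) -
          ⨅ t : T, ((∫ x, f x ∂(Pt t) : ℝ) : EReal))) (H n)) ∧
      ∀ᵐ ω ∂μ, Tendsto (fun n : ℕ => H n ω) atTop (𝓝 (0 : EReal)) := by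
  classical
  obtain ⟨M, hM⟩ := hfbdd
  set M0 : ℝ := max M 0 with hM0def
  have hM0 : ∀ x, |f x| ≤ M0 := fun x => (hM x).trans (le_max_left _ _)
  have hM0nn : (0 : ℝ) ≤ M0 := le_max_right _ _
  haveI : CompactSpace ↥T := isCompact_iff_compactSpace.mp hTcomp
  haveI : Nonempty ↥T := hTne.to_subtype
  -- continuity in the parameter
  have hptc : ∀ x : ℝ, Continuous fun t : ↥T => pt ↑t x := by
    intro x
    have h1 : Continuous fun t : ↥T => pTo x ↑t :=
      hC1.continuousOn.comp_continuous
        (continuous_const.prodMk continuous_subtype_val)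
        (fun t => ⟨Set.mem_univ x, hTTo t.2⟩)
    have h2 : (fun t : ↥T => pt ↑t x) = fun t : ↥T => pTo x ↑t :=
      funext fun t => (hagree ↑t t.2 x).symm
    rw [h2]; exact h1
  set σ : ℝ → ℝ := fun x => ⨆ t : T, pt t x with hσdef
  have hσbddA : ∀ x, BddAbove (Set.range fun t : ↥T => pt ↑t x) :=
    fun x => (isCompact_range (hptc x)).bddAbove
  have hσle : ∀ x (t : ↥T), pt ↑t x ≤ σ x := fun x t => le_ciSup (hσbddA x) t
  have hσ0 : ∀ x, 0 ≤ σ x := fun x =>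
    le_trans (hpt0 _ (Classical.arbitrary ↥T).2 x) (hσle x _)
  set F : ℝ → ↥T → ℝ := fun x t => f x * pt ↑t x / p x with hFdef
  have hFx : ∀ t : ↥T, Measurable fun x => F x t :=
    fun t => (hf.mul (hptm ↑t t.2)).div hpm
  have hFt : ∀ x, Continuous (F x) := fun x =>
    (continuous_const.mul (hptc x)).div_const _
  set env : ℝ → ℝ := fun x => M0 * (σ x / p x) with henvdef
  have henv0 : ∀ x, 0 ≤ env x :=
    fun x => mul_nonneg hM0nn (div_nonneg (hσ0 x) (hp0 x))
  have hboundF : ∀ x (t : ↥T), |F x t| ≤ env x := by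
    intro x t
    have h1 : F x t = f x * (pt ↑t x / p x) := mul_div_assoc _ _ _
    have h2 : 0 ≤ pt ↑t x / p x := div_nonneg (hpt0 _ t.2 x) (hp0 x)
    rw [h1, abs_mul, abs_of_nonneg h2]
    apply mul_le_mul (hM0 x) ?_ h2 hM0nn
    rcases eq_or_lt_of_le (hp0 x) with hp | hp
    · rw [← hp, div_zero, div_zero]
    · exact (div_le_div_iff_of_pos_right hp).2 (hσle x t)
  have hσmeas : Measurable σ := by
    apply measurable_ciSup_cont (env := σ) (fun t : ↥T => hptm ↑t t.2) hptc
    intro x t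
    rw [abs_of_nonneg (hpt0 _ t.2 x)]
    exact hσle x t
  have henvmeas : Measurable env := measurable_const.mul (hσmeas.div hpm)
  have henvi : Integrable env P := by
    refine ⟨henvmeas.aestronglyMeasurable, ?_⟩
    rw [hasFiniteIntegral_iff_ofReal (ae_of_all _ henv0), hP,
      lintegral_withDensity_eq_lintegral_mul _ hpm.ennreal_ofReal henvmeas.ennreal_ofReal]
    have hle : ∀ x, ((fun x => ENNReal.ofReal (p x)) * fun x => ENNReal.ofReal (env x)) x
        ≤ ENNReal.ofReal M0 * ENNReal.ofReal (σ x) := by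
      intro x
      simp only [Pi.mul_apply]
      rw [← ENNReal.ofReal_mul (hp0 x), ← ENNReal.ofReal_mul hM0nn]
      apply ENNReal.ofReal_le_ofReal
      rcases eq_or_lt_of_le (hp0 x) with hp | hp
      · rw [← hp, zero_mul]; exact mul_nonneg hM0nn (hσ0 x)
      · have : p x * env x = M0 * σ x := by
          rw [henvdef]; field_simp
        rw [this]
    calc ∫⁻ x, ((fun x => ENNReal.ofReal (p x)) * fun x => ENNReal.ofReal (env x)) x
        ≤ ∫⁻ x, ENNReal.ofReal M0 * ENNReal.ofReal (σ x) := lintegral_mono hle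
      _ = ENNReal.ofReal M0 * ∫⁻ x, ENNReal.ofReal (σ x) :=
          lintegral_const_mul _ hσmeas.ennreal_ofReal
      _ < ⊤ := ENNReal.mul_lt_top ENNReal.ofReal_lt_top (lt_top_iff_ne_top.2 hsupdens)
  -- the uniform strong law
  have hma := uniform_inf_slln P μ hmap hind F hFx hFt env henvi hboundF
  -- importance sampling identity
  have hid : ∀ t : ↥T, ∫ x, F x t ∂P = ∫ x, f x ∂(Pt ↑t) := by
    intro t
    have hptz : ∀ x, p x = 0 → pt ↑t x = 0 := by
      intro x hx
      by_contra h
      exact (hsupp ↑t t.2 x h) hx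
    rw [hP, hPt ↑t t.2]
    have e1 : (fun x => ENNReal.ofReal (p x))
        = fun x => ((Real.toNNReal (p x) : ℝ≥0) : ℝ≥0∞) := rfl
    have e2 : (fun x => ENNReal.ofReal (pt ↑t x))
        = fun x => ((Real.toNNReal (pt ↑t x) : ℝ≥0) : ℝ≥0∞) := rfl
    rw [e1, e2, integral_withDensity_eq_integral_smul hpm.real_toNNReal,
      integral_withDensity_eq_integral_smul (hptm ↑t t.2).real_toNNReal]
    apply integral_congr_ae (ae_of_all _ ?_)
    intro x
    rw [NNReal.smul_def, NNReal.smul_def, Real.coe_toNNReal _ (hp0 x),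
      Real.coe_toNNReal _ (hpt0 _ t.2 x), smul_eq_mul, smul_eq_mul, hFdef]
    rcases eq_or_ne (p x) 0 with hx | hx
    · rw [hx, hptz x hx]; ring
    · field_simp
  have hEeq : (⨅ t : ↥T, ∫ x, F x t ∂P) = ⨅ t : ↥T, ∫ x, f x ∂(Pt ↑t) := by
    exact congrArg _ (funext hid)
  -- continuity of the limit expectation
  have hEcont : Continuous fun t : ↥T => ∫ x, f x ∂(Pt ↑t) := by
    have h1 : Continuous fun t : ↥T => ∫ x, F x t ∂P := by
      apply continuous_of_dominated (bound := env)
        (fun t => (hFx t).aestronglyMeasurable)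
        (fun t => ae_of_all _ fun x => by
          rw [Real.norm_eq_abs]; exact hboundF x t) henvi
      exact ae_of_all _ hFt
    rw [← funext hid]; exact h1
  -- the empirical process
  set S : ℕ → (ℕ → ℝ) → ↥T → ℝ := fun n ω t =>
    (n : ℝ)⁻¹ * ∑ k ∈ Finset.range n, f (ω k) * pt ↑t (ω k) / p (ω k) with hSdef
  have hScont : ∀ n ω, Continuous (S n ω) := fun n ω =>
    continuous_const.mul (continuous_finset_sum _ fun k _ => hFt (ω k))
  have hSmeasω : ∀ n (t : ↥T), Measurable fun ω : ℕ → ℝ => S n ω t := fun n t =>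
    measurable_const.mul
      (Finset.measurable_sum _ fun k _ => (hFx t).comp (measurable_pi_apply k))
  have hSbound : ∀ n ω (t : ↥T),
      |S n ω t| ≤ (n : ℝ)⁻¹ * ∑ k ∈ Finset.range n, env (ω k) := by
    intro n ω t
    have h1 : |S n ω t| = (n : ℝ)⁻¹ *
        |∑ k ∈ Finset.range n, f (ω k) * pt ↑t (ω k) / p (ω k)| := by
      rw [hSdef]
      rw [abs_mul, abs_of_nonneg (by positivity : (0 : ℝ) ≤ (n : ℝ)⁻¹)]
    rw [h1]
    apply mul_le_mul_of_nonneg_left _ (by positivity)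
    exact (Finset.abs_sum_le_sum_abs _ _).trans
      (Finset.sum_le_sum fun k _ => hboundF (ω k) t)
  have hinfmeas : ∀ n, Measurable fun ω => ⨅ t : ↥T, S n ω t := fun n =>
    measurable_ciInf_cont (fun t => hSmeasω n t) (fun ω => hScont n ω)
      (fun ω t => hSbound n ω t)
  set cE : ℝ := ⨅ t : ↥T, ∫ x, f x ∂(Pt ↑t) with hcEdef
  have hcoeE : (⨅ t : ↥T, ((∫ x, f x ∂(Pt ↑t) : ℝ) : EReal)) = ((cE : ℝ) : EReal) :=
    ereal_iInf_coe hEcont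
  have hcoeS : ∀ n ω, (⨅ t : ↥T, ((S n ω t : ℝ) : EReal))
      = (((⨅ t : ↥T, S n ω t : ℝ)) : EReal) := fun n ω => ereal_iInf_coe (hScont n ω)
  refine ⟨fun n ω => eabs ((⨅ t : ↥T, ((S n ω t : ℝ) : EReal)) -
    ⨅ t : ↥T, ((∫ x, f x ∂(Pt ↑t) : ℝ) : EReal)), ?_, ?_⟩
  · intro n
    refine ⟨?_, fun ω => le_refl _, fun g' hg' hle => ae_of_all _ hle⟩
    have heq : (fun ω => eabs ((⨅ t : ↥T, ((S n ω t : ℝ) : EReal)) -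
        ⨅ t : ↥T, ((∫ x, f x ∂(Pt ↑t) : ℝ) : EReal)))
        = fun ω => ((|(⨅ t : ↥T, S n ω t) - cE| : ℝ) : EReal) := by
      funext ω
      rw [hcoeS, hcoeE, ← EReal.coe_sub, eabs_coe]
    have hmeas : Measurable fun ω : ℕ → ℝ => ((|(⨅ t : ↥T, S n ω t) - cE| : ℝ) : EReal) :=
      measurable_coe_real_ereal.comp (((hinfmeas n).sub measurable_const).abs)
    rw [← heq] at hmeas
    exact hmeas
  · filter_upwards [hma] with ω hω
    have hω' : Tendsto (fun n : ℕ => ⨅ t : ↥T, S n ω t) atTop (𝓝 cE) := by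
      rw [hEeq] at hω; exact hω
    have hreal : Tendsto (fun n : ℕ => |(⨅ t : ↥T, S n ω t) - cE|) atTop (𝓝 0) := by
      have h2 : Tendsto (fun n : ℕ => (⨅ t : ↥T, S n ω t) - cE) atTop (𝓝 0) := by
        simpa using hω'.sub_const cE
      simpa using h2.abs
    have hcoe := (continuous_coe_real_ereal.tendsto (0 : ℝ)).comp hreal
    rw [show (((0 : ℝ) : EReal)) = (0 : EReal) from rfl] at hcoe
    have heq2 : ∀ n : ℕ, eabs ((⨅ t : ↥T, ((S n ω t : ℝ) : EReal)) -
        ⨅ t : ↥T, ((∫ x, f x ∂(Pt ↑t) : ℝ) : EReal))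
        = ((|(⨅ t : ↥T, S n ω t) - cE| : ℝ) : EReal) := by
      intro n
      rw [hcoeS, hcoeE, ← EReal.coe_sub, eabs_coe]
    simp only [heq2]
    exact hcoe
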